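/- The bipartite metric K_{2,2} is Mossay–Tabuchi stable, and for every n ≥ 1 the metric K_{n,1} is Mossay–Tabuchi stable: in both cases the matrix Φ^{K_{n,m}}_t is positive semidefinite for every t ∈ (0,1). -/

import Mathlib

/-- The freeness-of-trade matrix of the bipartite metric `K_{n,m}`. -/
def PhiK (n m : ℕ) (t : ℝ) : Matrix (Fin (n + m)) (Fin (n + m)) ℝ :=
  Matrix.of fun i j =>
    if i = j then 1 else if ((i : ℕ) < n ↔ (j : ℕ) < n) then t ^ 2 else t

lemma phiK_symm (n m : ℕ) (t : ℝ) (i j : Fin (n + m)) :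
    PhiK n m t j i = PhiK n m t i j := by
  simp only [PhiK, Matrix.of_apply]
  by_cases h : i = j
  · simp [h]
  · rw [if_neg (fun h' => h h'.symm), if_neg h]
    by_cases h2 : ((i : ℕ) < n ↔ (j : ℕ) < n)
    · rw [if_pos h2.symm, if_pos h2]
    · rw [if_neg (fun h' => h2 h'.symm), if_neg h2]

lemma phiK_herm (n m : ℕ) (t : ℝ) : (PhiK n m t).IsHermitian := by
  ext i j
  simpa using phiK_symm n m t i j

lemma phiK_n1_entry (n : ℕ) (t : ℝ) (i j : Fin (n + 1)) :
    PhiK n 1 t i j =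
      (if (i : ℕ) < n then t else 1) * (if (j : ℕ) < n then t else 1) +
        (if j = i then (if (i : ℕ) < n then 1 - t ^ 2 else 0) else 0) := by
  simp only [PhiK, Matrix.of_apply]
  by_cases h : i = j
  · subst h
    by_cases hi : (i : ℕ) < n <;> simp [hi] <;> ring
  · rw [if_neg h, if_neg (show ¬ j = i from fun h' => h h'.symm), add_zero]
    by_cases hi : (i : ℕ) < n <;> by_cases hj : (j : ℕ) < n
    · simp [hi, hj]; ring
    · simp [hi, hj]
    · simp [hi, hj]
    · exfalso
      apply h
      have hi' : (i : ℕ) = n := Nat.le_antisymm (Nat.lt_succ_iff.mp i.isLt) (Nat.le_of_not_lt hi)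
      have hj' : (j : ℕ) = n := Nat.le_antisymm (Nat.lt_succ_iff.mp j.isLt) (Nat.le_of_not_lt hj)
      exact Fin.ext (hi'.trans hj'.symm)

/-- K_{2,2} is Mossay–Tabuchi stable, and K_{n,1} is Mossay–Tabuchi
stable for every n ≥ 1. -/
theorem PhiK_small_MT_stable :
    (∀ t ∈ Set.Ioo (0 : ℝ) 1, (PhiK 2 2 t).PosSemidef) ∧
    (∀ n : ℕ, 1 ≤ n → ∀ t ∈ Set.Ioo (0 : ℝ) 1, (PhiK n 1 t).PosSemidef) := by
  constructor
  · rintro t ⟨ht0, ht1⟩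
    refine Matrix.PosSemidef.of_dotProduct_mulVec_nonneg (phiK_herm 2 2 t) fun x => ?_
    have h1 : (0:ℝ) ≤ 1 - t ^ 2 := by nlinarith
    have h2 : (0:ℝ) ≤ 1 - t := by linarith
    simp only [dotProduct, Matrix.mulVec, PhiK, Matrix.of_apply, star_trivial,
      Fin.sum_univ_succ, Fin.sum_univ_zero]
    norm_num [Fin.ext_iff]
    have e3 : x (Fin.succ 2) = x 3 := rfl
    rw [e3]
    nlinarith [mul_nonneg h1 (sq_nonneg (x 0 - x 1)), mul_nonneg h1 (sq_nonneg (x 2 - x 3)),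
      mul_nonneg (mul_nonneg h2 h2) (sq_nonneg (x 0 + x 1 - x 2 - x 3)),
      sq_nonneg ((1 + t) * (x 0 + x 1 + x 2 + x 3)), sq_nonneg (x 0 + x 1 + x 2 + x 3)]
  · rintro n hn t ⟨ht0, ht1⟩
    refine Matrix.PosSemidef.of_dotProduct_mulVec_nonneg (phiK_herm n 1 t) fun x => ?_
    have h1 : (0:ℝ) ≤ 1 - t ^ 2 := by nlinarith
    have key : dotProduct (star x) (Matrix.mulVec (PhiK n 1 t) x) =
        (∑ i : Fin (n+1), (if (i:ℕ) < n then t else 1) * x i) ^ 2 +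
          (1 - t ^ 2) * ∑ i : Fin (n+1), (if (i:ℕ) < n then x i ^ 2 else 0) := by
      simp only [dotProduct, Matrix.mulVec, star_trivial]
      rw [sq, Finset.sum_mul_sum, Finset.mul_sum, ← Finset.sum_add_distrib]
      apply Finset.sum_congr rfl
      intro i _
      rw [Finset.mul_sum]
      have step : ∀ j : Fin (n+1), x i * (PhiK n 1 t i j * x j) =
          ((if (i:ℕ) < n then t else 1) * x i) * ((if (j:ℕ) < n then t else 1) * x j)
          + (if j = i then (if (i:ℕ) < n then 1 - t^2 else 0) * x i * x j else 0) := by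
        intro j
        rw [phiK_n1_entry]
        by_cases hj : j = i
        · subst hj; rw [if_pos rfl, if_pos rfl]; ring
        · rw [if_neg hj, if_neg hj]; ring
      simp only [step]
      rw [Finset.sum_add_distrib, Finset.sum_ite_eq' Finset.univ i]
      simp only [Finset.mem_univ, if_true]
      congr 1
      by_cases hi : (i:ℕ) < n
      · rw [if_pos hi, if_pos hi]; ring
      · rw [if_neg hi, if_neg hi]; ring
    rw [key]
    have h2 : (0:ℝ) ≤ ∑ i : Fin (n+1), (if (i:ℕ) < n then x i ^ 2 else 0) := by
      apply Finset.sum_nonneg; intro i _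
      by_cases hi : (i:ℕ) < n <;> simp [hi, sq_nonneg]
    positivity
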